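/- Let G be an oriented loopless multigraph with oriented incidence matrix D ∈ ℝ^{V×E}. Then the image of the cut lattice under D equals the group of principal divisors: {Dx : x ∈ B_I} = {the Laplacian applied to f : f is a function V → ℤ}, as subsets of the integer-valued functions on V (viewed inside ℝ^V). -/

import Mathlib

open Matrix Finset

section MatrixSpaces

variable {ι κ : Type*} [Fintype ι] [Fintype κ]

/-- The cycle space `Z = ker D`. -/
def cycleSpace (D : Matrix ι κ ℝ) : Submodule ℝ (κ → ℝ) :=
  LinearMap.ker D.mulVecLin

/-- The cut space `B = Z^⊥`, the orthogonal complement of the cycle space with respect to the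
standard inner product. -/
def cutSpace (D : Matrix ι κ ℝ) : Submodule ℝ (κ → ℝ) where
  carrier := {x | ∀ z ∈ cycleSpace D, x ⬝ᵥ z = 0}
  add_mem' := by
    intro a b ha hb z hz
    simp [add_dotProduct, ha z hz, hb z hz]
  zero_mem' := by
    intro z hz
    simp
  smul_mem' := by
    intro c a ha z hz
    simp [smul_dotProduct, ha z hz]

/-- The cut lattice `B_I = B ∩ ℤ^E`. -/
def cutLattice (D : Matrix ι κ ℝ) : Set (κ → ℝ) :=
  {x | x ∈ cutSpace D ∧ ∀ e, ∃ k : ℤ, x e = (k : ℝ)}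

/-- The cut lattice `B_I`, as an additive subgroup. -/
def cutLatticeSub (D : Matrix ι κ ℝ) : AddSubgroup (κ → ℝ) where
  carrier := cutLattice D
  add_mem' := by
    rintro a b ⟨ha, ha'⟩ ⟨hb, hb'⟩
    refine ⟨Submodule.add_mem _ ha hb, fun e => ?_⟩
    obtain ⟨k, hk⟩ := ha' e
    obtain ⟨l, hl⟩ := hb' e
    exact ⟨k + l, by simp [hk, hl]⟩
  zero_mem' := ⟨Submodule.zero_mem _, fun e => ⟨0, by simp⟩⟩
  neg_mem' := by
    rintro a ⟨ha, ha'⟩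
    refine ⟨Submodule.neg_mem _ ha, fun e => ?_⟩
    obtain ⟨k, hk⟩ := ha' e
    exact ⟨-k, by simp [hk]⟩

/-- The dual lattice `B_I^# = {x ∈ B : ⟨x,b⟩ ∈ ℤ for all b ∈ B_I}`, as an additive subgroup. -/
def dualLatticeSub (D : Matrix ι κ ℝ) : AddSubgroup (κ → ℝ) where
  carrier := {x | x ∈ cutSpace D ∧ ∀ b ∈ cutLattice D, ∃ k : ℤ, x ⬝ᵥ b = (k : ℝ)}
  add_mem' := by
    rintro a b ⟨ha, ha'⟩ ⟨hb, hb'⟩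
    refine ⟨Submodule.add_mem _ ha hb, fun c hc => ?_⟩
    obtain ⟨k, hk⟩ := ha' c hc
    obtain ⟨l, hl⟩ := hb' c hc
    exact ⟨k + l, by simp [add_dotProduct, hk, hl]⟩
  zero_mem' := ⟨Submodule.zero_mem _, fun c _ => ⟨0, by simp⟩⟩
  neg_mem' := by
    rintro a ⟨ha, ha'⟩
    refine ⟨Submodule.neg_mem _ ha, fun c hc => ?_⟩
    obtain ⟨k, hk⟩ := ha' c hc
    exact ⟨-k, by simp [neg_dotProduct, hk]⟩

end MatrixSpaces

section Incidence

variable {V E : Type*} [Fintype V] [Fintype E] [DecidableEq V]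

/-- The oriented incidence matrix of an oriented multigraph with head map `h` and
tail map `t`. -/
def incMatrix (h t : E → V) : Matrix V E ℝ :=
  fun v e => if v = h e then 1 else if v = t e then -1 else 0

/-- The edge-multiplicity function determined by the orientation maps `h` and `t`. -/
def wOf (h t : E → V) (u v : V) : ℕ :=
  (Finset.univ.filter fun e => (h e = u ∧ t e = v) ∨ (h e = v ∧ t e = u)).card

end Incidence

variable {V : Type*}

/-- Degree of a vertex in the loopless multigraph with edge-multiplicity function `w`. -/
def mgDeg [Fintype V] (w : V → V → ℕ) (v : V) : ℕ := ∑ u, w v u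

/-- The Laplacian of the multigraph, as an additive homomorphism on `V → ℤ`. -/
def mgLap [Fintype V] (w : V → V → ℕ) : (V → ℤ) →+ (V → ℤ) :=
  AddMonoidHom.mk' (fun f v => (mgDeg w v : ℤ) * f v - ∑ u, (w v u : ℤ) * f u)
    (by
      intro f g
      funext v
      simp [mul_add, Finset.sum_add_distrib]
      ring)


section Aux

open Matrix Finset

private lemma innerDot {κ : Type*} [Fintype κ] (a b : EuclideanSpace ℝ κ) :
    (inner ℝ a b : ℝ) = (a : κ → ℝ) ⬝ᵥ (b : κ → ℝ) := by
  simp [PiLp.inner_apply, dotProduct, RCLike.inner_apply, mul_comm]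

private lemma mem_range_vecMul {ι κ : Type*} [Fintype ι] [Fintype κ]
    (D : Matrix ι κ ℝ) (x : κ → ℝ)
    (hx : ∀ z : κ → ℝ, D.mulVec z = 0 → x ⬝ᵥ z = 0) :
    ∃ g : ι → ℝ, x = Matrix.vecMul g D := by
  let W : Submodule ℝ (EuclideanSpace ℝ κ) :=
    LinearMap.range ((WithLp.linearEquiv 2 ℝ (κ → ℝ)).symm.toLinearMap ∘ₗ Dᵀ.mulVecLin)
  obtain ⟨y, hy, z, hz, hxyz⟩ := W.exists_add_mem_mem_orthogonal (WithLp.toLp 2 x)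
  have hzker : D.mulVec z = 0 := by
    apply dotProduct_eq_zero
    intro w
    have h1 : @inner ℝ (EuclideanSpace ℝ κ) _ (WithLp.toLp 2 (Dᵀ.mulVec w)) z = 0 :=
      (Submodule.mem_orthogonal W z).mp hz _ ⟨w, rfl⟩
    rw [innerDot] at h1
    have h2 : (Dᵀ.mulVec w) ⬝ᵥ z = 0 := h1
    rwa [Matrix.mulVec_transpose, ← dotProduct_mulVec, dotProduct_comm] at h2
  have hyz : (y : κ → ℝ) ⬝ᵥ z = 0 := by
    rw [← innerDot]
    exact Submodule.inner_right_of_mem_orthogonal hy hz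
  have hxz : x ⬝ᵥ z = 0 := hx z hzker
  have hzz : (z : κ → ℝ) ⬝ᵥ z = 0 := by
    have hsplit : x ⬝ᵥ z = (y : κ → ℝ) ⬝ᵥ z + (z : κ → ℝ) ⬝ᵥ z := by
      have hxe : x = ((y + z : EuclideanSpace ℝ κ) : κ → ℝ) := by rw [← hxyz]
      rw [hxe]; exact add_dotProduct _ _ _
    rw [hxz, hyz] at hsplit; linarith
  have hz0 : (z : κ → ℝ) = 0 := dotProduct_self_eq_zero.mp hzz
  have hxe : x = ((y + z : EuclideanSpace ℝ κ) : κ → ℝ) := by rw [← hxyz]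
  obtain ⟨g, hg⟩ := hy
  refine ⟨g, ?_⟩
  rw [hxe, WithLp.ofLp_add, hz0, add_zero, ← hg]
  show Dᵀ.mulVec g = Matrix.vecMul g D
  rw [Matrix.mulVec_transpose]

variable {V E : Type*} [Fintype V] [Fintype E] [DecidableEq V] (h t : E → V)

private lemma vecMul_inc (hne : ∀ e, h e ≠ t e) (g : V → ℝ) (e : E) :
    Matrix.vecMul g (incMatrix h t) e = g (h e) - g (t e) := by
  unfold Matrix.vecMul incMatrix dotProduct
  have key : ∀ v, g v * (if v = h e then (1:ℝ) else if v = t e then -1 else 0)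
      = (if v = h e then g v else 0) + (if v = t e then -(g v) else 0) := by
    intro v
    split_ifs with h1 h2 <;> first | (exfalso; exact hne e (h1 ▸ h2 ▸ rfl)) | ring
  rw [Finset.sum_congr rfl fun v _ => key v, Finset.sum_add_distrib]
  simp [Finset.sum_ite_eq', sub_eq_add_neg]

private lemma lap_eq (hne : ∀ e, h e ≠ t e) (f : V → ℝ) (v : V) :
    ((incMatrix h t).mulVec (Matrix.vecMul f (incMatrix h t))) v
      = (∑ u, (wOf h t v u : ℝ)) * f v - ∑ u, (wOf h t v u : ℝ) * f u := by
  have key : ∀ u, (wOf h t v u : ℝ) * f u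
      = ∑ e, if (h e = v ∧ t e = u) ∨ (h e = u ∧ t e = v) then f u else 0 := by
    intro u
    rw [wOf, Finset.card_filter]
    push_cast
    rw [Finset.sum_mul]
    refine Finset.sum_congr rfl fun e _ => ?_
    split_ifs <;> ring
  have inner : ∀ e, (∑ u, if (h e = v ∧ t e = u) ∨ (h e = u ∧ t e = v) then f u else 0)
      = if h e = v then f (t e) else if t e = v then f (h e) else 0 := by
    intro e
    by_cases h1 : h e = v
    · rw [if_pos h1]
      rw [Finset.sum_eq_single (t e)]
      · simp [h1]
      · intro u _ hu
        rw [if_neg]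
        rintro (⟨-, h3⟩ | ⟨h3, h4⟩)
        · exact hu h3.symm
        · exact hne e (h1.trans h4.symm)
      · simp
    · rw [if_neg h1]
      by_cases h2 : t e = v
      · rw [if_pos h2]
        rw [Finset.sum_eq_single (h e)]
        · simp [h2]
        · intro u _ hu
          rw [if_neg]
          rintro (⟨h3, -⟩ | ⟨h3, h4⟩)
          · exact h1 h3
          · exact hu h3.symm
        · simp
      · rw [if_neg h2]
        refine Finset.sum_eq_zero fun u _ => ?_
        rw [if_neg]
        rintro (⟨h3, -⟩ | ⟨-, h3⟩)
        · exact h1 h3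
        · exact h2 h3
  have hsum : ∑ u, (wOf h t v u : ℝ) * f u
      = ∑ e, if h e = v then f (t e) else if t e = v then f (h e) else 0 := by
    rw [Finset.sum_congr rfl fun u _ => key u, Finset.sum_comm]
    exact Finset.sum_congr rfl fun e _ => inner e
  have hdeg : (∑ u, (wOf h t v u : ℝ)) * f v
      = ∑ e, (if h e = v then f v else if t e = v then f v else 0) := by
    rw [Finset.sum_mul]
    have h2 : ∀ u, (wOf h t v u : ℝ) * f v
        = ∑ e, if (h e = v ∧ t e = u) ∨ (h e = u ∧ t e = v) then f v else 0 := by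
      intro u
      rw [wOf, Finset.card_filter]
      push_cast
      rw [Finset.sum_mul]
      refine Finset.sum_congr rfl fun e _ => ?_
      split_ifs <;> ring
    rw [Finset.sum_congr rfl fun u _ => h2 u, Finset.sum_comm]
    refine Finset.sum_congr rfl fun e _ => ?_
    by_cases hh : h e = v
    · rw [if_pos hh, Finset.sum_eq_single (t e)]
      · simp [hh]
      · intro u _ hu
        rw [if_neg]
        rintro (⟨-, h3⟩ | ⟨h3, h4⟩)
        · exact hu h3.symm
        · exact hne e (hh.trans h4.symm)
      · simp
    · rw [if_neg hh]
      by_cases h2' : t e = v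
      · rw [if_pos h2', Finset.sum_eq_single (h e)]
        · simp [h2']
        · intro u _ hu
          rw [if_neg]
          rintro (⟨h3, -⟩ | ⟨h3, h4⟩)
          · exact hh h3
          · exact hu h3.symm
        · simp
      · rw [if_neg h2']
        refine Finset.sum_eq_zero fun u _ => ?_
        rw [if_neg]
        rintro (⟨h3, -⟩ | ⟨-, h3⟩)
        · exact hh h3
        · exact h2' h3
  rw [hsum, hdeg, ← Finset.sum_sub_distrib]
  unfold Matrix.mulVec dotProduct
  refine Finset.sum_congr rfl fun e _ => ?_
  rw [vecMul_inc h t hne f e]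
  simp only [incMatrix]
  have hnee := hne e
  split_ifs <;> subst_vars <;>
    first
      | ring1
      | exact absurd rfl ‹¬h e = h e›
      | exact absurd rfl ‹¬t e = t e›
      | exact absurd ‹h e = t e› hnee

private lemma exists_int_potential (g : V → ℝ)
    (hint : ∀ e, ∃ k : ℤ, g (h e) - g (t e) = (k : ℝ)) :
    ∃ f : V → ℤ, ∀ e, ((f (h e) : ℝ)) - ((f (t e) : ℝ)) = g (h e) - g (t e) := by
  classical
  let r : V → V → Prop := fun u v => ∃ e, (h e = u ∧ t e = v) ∨ (h e = v ∧ t e = u)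
  have step : ∀ u v, r u v → ∃ k : ℤ, g u - g v = (k : ℝ) := by
    rintro u v ⟨e, (⟨rfl, rfl⟩ | ⟨rfl, rfl⟩)⟩
    · exact hint e
    · obtain ⟨k, hk⟩ := hint e
      exact ⟨-k, by push_cast; linarith⟩
  have gen : ∀ u v, Relation.EqvGen r u v → ∃ k : ℤ, g u - g v = (k : ℝ) := by
    intro u v hruv
    induction hruv with
    | rel a b hab => exact step a b hab
    | refl a => exact ⟨0, by simp⟩
    | symm a b _ ih =>
        obtain ⟨k, hk⟩ := ih
        exact ⟨-k, by push_cast; linarith⟩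
    | trans a b c _ _ ih1 ih2 =>
        obtain ⟨k, hk⟩ := ih1
        obtain ⟨l, hl⟩ := ih2
        exact ⟨k + l, by push_cast; linarith⟩
  have hmk : ∀ v : V, ∃ k : ℤ, g v - g ((Quot.mk r v).out) = (k : ℝ) := fun v =>
    gen _ _ (Quot.eqvGen_exact (by rw [Quot.out_eq]))
  choose f hf using hmk
  refine ⟨f, fun e => ?_⟩
  have hsame : (Quot.mk r (h e)) = (Quot.mk r (t e)) :=
    Quot.sound ⟨e, Or.inl ⟨rfl, rfl⟩⟩
  have h1 := hf (h e)
  have h2 := hf (t e)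
  rw [hsame] at h1
  linarith

end Aux

/-- for an oriented loopless multigraph, the image of the cut lattice under the
incidence matrix `D` equals the set of principal divisors (images of the Laplacian), inside
`ℝ^V`. -/
theorem stmt13 (V E : Type*) [Fintype V] [Fintype E] [DecidableEq V]
    (h t : E → V) (hne : ∀ e : E, h e ≠ t e) :
    {y : V → ℝ | ∃ x ∈ cutLattice (incMatrix h t), (incMatrix h t).mulVec x = y} =
      {y : V → ℝ | ∃ f : V → ℤ, y = fun v => ((mgLap (wOf h t) f v : ℤ) : ℝ)} := by
  classical
  set D := incMatrix h t with hD
  ext y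
  simp only [Set.mem_setOf_eq]
  constructor
  · rintro ⟨x, ⟨hxcut, hxint⟩, rfl⟩
    have hx : ∀ z : E → ℝ, D.mulVec z = 0 → x ⬝ᵥ z = 0 := by
      intro z hz
      exact hxcut z (by simpa [cycleSpace, Matrix.mulVecLin_apply] using hz)
    obtain ⟨g, hg⟩ := mem_range_vecMul D x hx
    have hint : ∀ e, ∃ k : ℤ, g (h e) - g (t e) = (k : ℝ) := by
      intro e
      obtain ⟨k, hk⟩ := hxint e
      refine ⟨k, ?_⟩
      rw [← vecMul_inc h t hne g e, ← hg]
      exact hk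
    obtain ⟨f, hf⟩ := exists_int_potential h t g hint
    refine ⟨f, ?_⟩
    funext v
    have hxx : x = Matrix.vecMul (fun u => (f u : ℝ)) D := by
      rw [hg]
      funext e
      rw [vecMul_inc h t hne, vecMul_inc h t hne]
      exact (hf e).symm
    rw [hxx, lap_eq h t hne (fun u => (f u : ℝ)) v]
    simp only [mgLap, mgDeg, AddMonoidHom.mk', AddMonoidHom.coe_mk, ZeroHom.coe_mk, wOf]
    push_cast
    ring
  · rintro ⟨f, rfl⟩
    refine ⟨Matrix.vecMul (fun u => (f u : ℝ)) D, ⟨?_, ?_⟩, ?_⟩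
    · intro z hz
      have hz' : D.mulVec z = 0 := by
        simpa [cycleSpace, Matrix.mulVecLin_apply] using hz
      rw [← dotProduct_mulVec, hz', dotProduct_zero]
    · intro e
      refine ⟨f (h e) - f (t e), ?_⟩
      rw [vecMul_inc h t hne]
      push_cast
      ring
    · funext v
      rw [lap_eq h t hne (fun u => (f u : ℝ)) v]
      simp only [mgLap, mgDeg, AddMonoidHom.mk', AddMonoidHom.coe_mk, ZeroHom.coe_mk, wOf]
      push_cast
      ring
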